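/- Let R be a commutative ring with an injective ring endomorphism φ that is flat as a ring map, and let M be a finitely generated R-module with a φ-semilinear endomorphism φ_M such that the linearization R ⊗_{φ,R} M → M is an isomorphism. Then for every n ≥ 1, the π-torsion submodule M[π^n] = {x ∈ M : π^n x = 0} (for any π ∈ R) satisfies: the linearization R ⊗_{φ,R} M[π^n] → M[π^n] is an isomorphism. -/

import Mathlib

open TensorProduct

/-- Type synonym: `M` with the `R`-module structure twisted by `φ` (i.e. `r • m = φ r • m`).
For `M = R` this is "`R` viewed as an `R`-module via `φ`". -/
@[nolint unusedArguments]
def Twist (R : Type*) [CommRing R] (φ : R →+* R) (M : Type*) [AddCommGroup M] [Module R M] :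
    Type _ := M

namespace Twist

variable {R : Type*} [CommRing R] (φ : R →+* R) {M : Type*} [AddCommGroup M] [Module R M]

instance : AddCommGroup (Twist R φ M) := inferInstanceAs (AddCommGroup M)

instance : Module R (Twist R φ M) := Module.compHom M φ

theorem smul_def (r : R) (m : M) :
    (r • (show Twist R φ M from m)) = (show Twist R φ M from (φ r • m)) := rfl

end Twist

/-- The linearization `R ⊗_{φ,R} M → M`, `x ⊗ m ↦ x • φM m`, of a `φ`-semilinear map
`φM : M → M`.  It is `R`-linear when the left tensor factor and the target carry the
`φ`-twisted module structures.  An étale `φ`-module is a finite module `M` for which this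
map is bijective. -/
noncomputable def linearization {R : Type*} [CommRing R] (φ : R →+* R)
    {M : Type*} [AddCommGroup M] [Module R M] (φM : M →ₛₗ[φ] M) :
    TensorProduct R (Twist R φ R) M →ₗ[R] Twist R φ M :=
  TensorProduct.lift
    { toFun := fun x =>
        { toFun := fun m => show Twist R φ M from (show R from x) • φM m
          map_add' := fun a b => by
            show ((show R from x) • φM (a + b) : M) = (show R from x) • φM a + (show R from x) • φM b
            rw [map_add]; exact smul_add (id (α := R) x) (φM a) (φM b)
          map_smul' := fun r m => by
            show ((show R from x) • φM (r • m) : M) = φ r • ((show R from x) • φM m)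
            rw [LinearMap.map_smulₛₗ, smul_comm] }
      map_add' := fun x y => by
        ext m
        show ((show R from x) + (show R from y)) • φM m = (show R from x) • φM m + (show R from y) • φM m
        exact add_smul (id (α := R) x) (id (α := R) y) (φM m)
      map_smul' := fun r x => by
        ext m
        show (φ r * (show R from x)) • φM m = (φ r • ((show R from x) • φM m) : M)
        exact mul_smul (φ r) (id (α := R) x) (φM m) }

/-- Let `R` be a commutative ring with a flat injective endomorphism `φ`
(fixing `π`), and `M` an étale `φ`-module over `R` (finite, with bijective linearization
`R ⊗_{φ,R} M → M`).  Then for every `n ≥ 1` and `π ∈ R`, the `π^n`-torsion submodule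
`M[π^n]` is again étale: any semilinear restriction of `φM` to `M[π^n]` has bijective
linearization `R ⊗_{φ,R} M[π^n] → M[π^n]`. -/
theorem statement_2 {R : Type*} [CommRing R] (φ : R →+* R)
    (hφinj : Function.Injective φ)
    (hflat : Module.Flat R (Twist R φ R))
    {M : Type*} [AddCommGroup M] [Module R M] [Module.Finite R M]
    (φM : M →ₛₗ[φ] M)
    (hetale : Function.Bijective (linearization φ φM))
    (π : R) (hπ : φ π = π) (n : ℕ) (hn : 1 ≤ n)
    (ψ : ↥(Submodule.torsionBy R M (π ^ n)) →ₛₗ[φ] ↥(Submodule.torsionBy R M (π ^ n)))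
    (hψ : ∀ m : ↥(Submodule.torsionBy R M (π ^ n)), (ψ m : M) = φM (m : M)) :
    Function.Bijective (linearization φ ψ) := by
  haveI := hflat
  let incl : ↥(Submodule.torsionBy R M (π ^ n)) →ₗ[R] M := (Submodule.torsionBy R M (π ^ n)).subtype
  have hincl_inj : Function.Injective incl := Subtype.val_injective
  have hcomm : ∀ s : TensorProduct R (Twist R φ R) ↥(Submodule.torsionBy R M (π ^ n)),
      (linearization φ φM) (incl.lTensor (Twist R φ R) s) = (incl ((linearization φ ψ) s) : M) := by
    intro s
    induction s using TensorProduct.induction_on with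
    | zero => simp; rfl
    | tmul x m =>
        show ((show R from x) • φM (m : M) : M)
          = (((show R from x) • ψ m : ↥(Submodule.torsionBy R M (π ^ n))) : M)
        rw [Submodule.coe_smul, hψ]
    | add a b ha hb => simp [map_add, ha, hb]; rfl
  have hsmul : ∀ t : TensorProduct R (Twist R φ R) M,
      (LinearMap.lsmul R M (π ^ n)).lTensor (Twist R φ R) t = (π ^ n : R) • t := by
    intro t
    induction t using TensorProduct.induction_on with
    | zero => simp
    | tmul x m =>
        show x ⊗ₜ[R] ((π ^ n : R) • m) = (π ^ n : R) • (x ⊗ₜ[R] m)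
        rw [TensorProduct.tmul_smul]
    | add a b ha hb => simp [map_add, ha, hb, smul_add]
  have hexact : Function.Exact incl (LinearMap.lsmul R M (π ^ n)) := by
    intro y
    constructor
    · intro h
      exact ⟨⟨y, h⟩, rfl⟩
    · rintro ⟨⟨x, hx⟩, rfl⟩
      exact hx
  have hTexact := Module.Flat.lTensor_exact (Twist R φ R) hexact
  have hTinj : Function.Injective (incl.lTensor (Twist R φ R)) :=
    Module.Flat.lTensor_preserves_injective_linearMap incl hincl_inj
  constructor
  · intro s t hst
    apply hTinj
    apply hetale.1
    rw [hcomm, hcomm]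
    exact congrArg _ hst
  · intro m'
    obtain ⟨t, ht⟩ := hetale.2 (show Twist R φ M from (incl m' : M))
    have h1 : (π ^ n : R) • t = 0 := by
      apply hetale.1
      rw [map_smul, ht, map_zero]
      show (φ (π ^ n) • (incl m' : M)) = 0
      rw [map_pow, hπ]
      exact m'.2
    have h2 : (LinearMap.lsmul R M (π ^ n)).lTensor (Twist R φ R) t = 0 := by rw [hsmul, h1]
    obtain ⟨s, hs⟩ := (hTexact t).mp h2
    refine ⟨s, ?_⟩
    apply hincl_inj
    rw [← hcomm, hs, ht]
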